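/- Let β = [[−a, l, 0], [m, A, −𝕁ᵗl], [0, −ᵗm𝕁, a]] be an element of 𝔰𝔬(2,n+1) in the displayed block form, and assume β² = −Id_{n+3}. Then the column vector m is nonzero and lightlike for the Minkowski form, i.e. m ≠ 0 and ᵗm𝕁m = 0; and likewise l ≠ 0 and l𝕁ᵗl = 0, i.e. the vector 𝕁ᵗl is nonzero and lightlike. -/
import Mathlib


open Matrix

/- Setup: the Lie algebra 𝔰𝔬(2,n+1) in block form.  The index type of the
(n+3)×(n+3) matrices is `Fin 1 ⊕ (Fin (n+1) ⊕ Fin 1)`, corresponding to the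
decomposition ℝ^{n+3} = ℝ ⊕ ℝ^{n+1} ⊕ ℝ. -/

/-- The index type for (n+3)×(n+3) block matrices. -/
abbrev Idx (n : ℕ) := Fin 1 ⊕ (Fin (n + 1) ⊕ Fin 1)

/-- The Minkowski Gram matrix 𝕁 = diag(−1, 1, …, 1) of signature (1,n) on ℝ^{n+1}. -/
def MinkJ (n : ℕ) : Matrix (Fin (n + 1)) (Fin (n + 1)) ℝ :=
  Matrix.diagonal fun i => if i = 0 then (-1 : ℝ) else 1

/-- The block matrix β = [[−a, l, 0], [m, A, −𝕁ᵗl], [0, −ᵗm𝕁, a]]. -/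
def betaMat (n : ℕ) (a : ℝ) (m l : Fin (n + 1) → ℝ)
    (A : Matrix (Fin (n + 1)) (Fin (n + 1)) ℝ) : Matrix (Idx n) (Idx n) ℝ :=
  Matrix.of fun i j =>
    match i, j with
    | Sum.inl _, Sum.inl _ => -a
    | Sum.inl _, Sum.inr (Sum.inl k) => l k
    | Sum.inl _, Sum.inr (Sum.inr _) => 0
    | Sum.inr (Sum.inl k), Sum.inl _ => m k
    | Sum.inr (Sum.inl k), Sum.inr (Sum.inl k') => A k k'
    | Sum.inr (Sum.inl k), Sum.inr (Sum.inr _) => -((MinkJ n).mulVec l k)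
    | Sum.inr (Sum.inr _), Sum.inl _ => 0
    | Sum.inr (Sum.inr _), Sum.inr (Sum.inl k) => -(Matrix.vecMul m (MinkJ n) k)
    | Sum.inr (Sum.inr _), Sum.inr (Sum.inr _) => a

/-- If β ∈ 𝔰𝔬(2,n+1) in the displayed block form satisfies β² = −Id,
then m is nonzero and lightlike (ᵗm𝕁m = 0), and likewise l is nonzero and lightlike
(l𝕁ᵗl = 0, i.e. the vector 𝕁ᵗl is nonzero and lightlike). -/
theorem stmt0 (n : ℕ) (hn : 1 ≤ n) (a : ℝ) (m l : Fin (n + 1) → ℝ)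
    (A : Matrix (Fin (n + 1)) (Fin (n + 1)) ℝ)
    (hA : Aᵀ * MinkJ n + MinkJ n * A = 0)
    (hβ : betaMat n a m l A * betaMat n a m l A = -1) :
    m ≠ 0 ∧ m ⬝ᵥ (MinkJ n).mulVec m = 0 ∧
      l ≠ 0 ∧ l ⬝ᵥ (MinkJ n).mulVec l = 0 := by
  have h1 := congrFun (congrFun hβ (Sum.inl 0)) (Sum.inl 0)
  have h2 := congrFun (congrFun hβ (Sum.inl 0)) (Sum.inr (Sum.inr 0))
  have h3 := congrFun (congrFun hβ (Sum.inr (Sum.inr 0))) (Sum.inl 0)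
  simp [Matrix.mul_apply, betaMat, Fintype.sum_sum_type, Matrix.neg_apply,
    Matrix.one_apply] at h1 h2 h3
  have hml : a ^ 2 + l ⬝ᵥ m = -1 := by
    rw [pow_two]; simpa [dotProduct] using h1
  have hll : l ⬝ᵥ (MinkJ n).mulVec l = 0 := by
    simpa [dotProduct, mul_comm] using h2
  have hmm : m ⬝ᵥ (MinkJ n).mulVec m = 0 := by
    rw [Matrix.dotProduct_mulVec]
    simpa [dotProduct] using h3
  refine ⟨?_, hmm, ?_, hll⟩
  · rintro rfl
    simp at hml
    nlinarith [sq_nonneg a]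
  · rintro rfl
    simp at hml
    nlinarith [sq_nonneg a]
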